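/- For the SO(2N) Seiberg-Witten differential dS_{SW} = (2Q'(x^2)x^2 - 2Q(x^2)) dx/y on y^2 = Q(x^2)^2 - 4\mu^2 x^4, the u_j-derivative at constant z equals x^{2N-2j} dx / y for j = 1,...,N. -/

import Mathlib

/-- For the SO(2N) Seiberg–Witten differential
`dS = (2Q'(x²)x² - 2Q(x²)) dx/y` on `y² = Q(x²)² - 4μ²x⁴` (Toda form
`z + μ²/z = x⁻²Q(x²)`, branch `z - μ²/z = y/x²`), with the coefficient `u_j` of
`Q(ξ) = Q₀(ξ) - u_j ξ^{N-j}` varied along the parameter `s` at constant `z`, the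
`u_j`-derivative of `dS` equals `x^{2N-2j} dx/y`:
`x'·(2Q'(x²)x² - 2Q(x²))/(x·y) = x^{2N-2j}/y` for `j = 1, …, N`. -/
theorem stmt11 (N j : ℕ) (hj1 : 1 ≤ j) (hj2 : j ≤ N)
    (Q₀ : Polynomial ℂ) (μ z : ℂ) (hz : z ≠ 0)
    (Q : ℂ → Polynomial ℂ)
    (hQ : ∀ s, Q s = Q₀ - Polynomial.C s * Polynomial.X ^ (N - j))
    (x : ℂ → ℂ) (x' : ℂ) (s₀ : ℂ)
    (hx : HasDerivAt x x' s₀)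
    (hx0 : ∀ s, x s ≠ 0)
    (hcurve : ∀ s, (Q s).eval ((x s) ^ 2) / (x s) ^ 2 = z + μ ^ 2 / z)
    (y : ℂ) (hy : y ≠ 0)
    (hy2 : y ^ 2 = ((Q s₀).eval ((x s₀) ^ 2)) ^ 2 - 4 * μ ^ 2 * (x s₀) ^ 4)
    (hybr : y / (x s₀) ^ 2 = z - μ ^ 2 / z) :
    x' * (2 * (Polynomial.derivative (Q s₀)).eval ((x s₀) ^ 2) * (x s₀) ^ 2
          - 2 * (Q s₀).eval ((x s₀) ^ 2)) / (x s₀ * y)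
      = (x s₀) ^ (2 * N - 2 * j) / y := by
  set m := N - j with hm
  set u := x s₀ with hu
  have hu0 : u ≠ 0 := hx0 s₀
  have hx2 : HasDerivAt (fun s => x s ^ 2) (2 * u * x') s₀ := by
    have := hx.fun_pow 2
    simpa [hu] using this
  have h1 : HasDerivAt (fun s => Q₀.eval (x s ^ 2))
      (Q₀.derivative.eval (u ^ 2) * (2 * u * x')) s₀ :=
    (Q₀.hasDerivAt (u ^ 2)).comp (h := fun s => x s ^ 2) s₀ hx2
  have h2 : HasDerivAt (fun s => s * (x s ^ 2) ^ m)
      (1 * (u ^ 2) ^ m + s₀ * ((m : ℂ) * (u ^ 2) ^ (m - 1) * (2 * u * x'))) s₀ :=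
    (hasDerivAt_id s₀).mul (hx2.pow m)
  have hA : HasDerivAt (fun s => Q₀.eval (x s ^ 2) - s * (x s ^ 2) ^ m)
      (Q₀.derivative.eval (u ^ 2) * (2 * u * x')
        - (1 * (u ^ 2) ^ m + s₀ * ((m : ℂ) * (u ^ 2) ^ (m - 1) * (2 * u * x')))) s₀ :=
    h1.sub h2
  have hdiv := hA.fun_div hx2 (pow_ne_zero 2 hu0)
  have hconst : (fun s => (Q₀.eval (x s ^ 2) - s * (x s ^ 2) ^ m) / x s ^ 2)
      = fun _ => z + μ ^ 2 / z := by
    funext s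
    have := hcurve s
    rw [hQ s] at this
    simpa using this
  rw [hconst] at hdiv
  have hzero := (hasDerivAt_const s₀ (z + μ ^ 2 / z)).unique hdiv
  have hQe : (Q s₀).eval (u ^ 2) = Q₀.eval (u ^ 2) - s₀ * (u ^ 2) ^ m := by
    simp [hQ s₀]
  have hQd : (Polynomial.derivative (Q s₀)).eval (u ^ 2)
      = Q₀.derivative.eval (u ^ 2) - s₀ * ((m : ℂ) * (u ^ 2) ^ (m - 1)) := by
    simp [hQ s₀, Polynomial.derivative_X_pow]
  have hE : (Q₀.derivative.eval (u ^ 2) * (2 * u * x')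
        - (1 * (u ^ 2) ^ m + s₀ * ((m : ℂ) * (u ^ 2) ^ (m - 1) * (2 * u * x')))) * u ^ 2
      - (Q₀.eval (u ^ 2) - s₀ * (u ^ 2) ^ m) * (2 * u * x') = 0 := by
    rw [← hu, eq_comm, div_eq_iff (pow_ne_zero 2 (pow_ne_zero 2 hu0)), zero_mul] at hzero
    linear_combination hzero
  have hpow : u ^ (2 * N - 2 * j) = (u ^ 2) ^ m := by
    rw [← pow_mul]
    congr 1
    omega
  have key : u * (x' * (2 * (Q₀.derivative.eval (u ^ 2) - s₀ * ((m : ℂ) * (u ^ 2) ^ (m - 1)))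
        * u ^ 2 - 2 * (Q₀.eval (u ^ 2) - s₀ * (u ^ 2) ^ m)))
      = u * ((u ^ 2) ^ m * u) := by linear_combination hE
  have key' := mul_left_cancel₀ hu0 key
  rw [hpow, hQe, hQd, div_eq_div_iff (mul_ne_zero hu0 hy) hy]
  linear_combination y * key'
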